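/- Fix natural numbers n ≥ 1 and ε, data y : ZMod n → ℝ, and λ ≥ 0. The equation f = (1/(1+λ)) · (y + λ · A² f) has a unique solution f : ZMod n → ℝ, and this solution is the recursive convolutional average f = (1/(1+λ)) · Σ_{k=0}^{∞} (λ/(1+λ))^k · A^{2k} y, where the series converges in sup norm. In particular, the symmetric-game equilibrium predictor has the same geometric decay rate λ/(1+λ) as the asymmetric-game equilibrium predictor, but its convolutional kernel at step k is A^{2k} instead of A^k (the kernel evolves twice as fast). -/

import Mathlib

/-- The window-averaging operator `A` on functions `ZMod n → ℝ`:
`(A f)(t) = (1/(2ε+1)) · ∑_{s = -ε}^{ε} f(t + s)`. -/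
noncomputable def winAvg (n ε : ℕ) (f : ZMod n → ℝ) : ZMod n → ℝ :=
  fun t => (1 / (2 * (ε : ℝ) + 1)) * ∑ s ∈ Finset.Icc (-(ε : ℤ)) (ε : ℤ), f (t + (s : ZMod n))

/-- The sup norm `‖f‖ = max_t |f(t)|` of `f : ZMod n → ℝ` (for `n ≥ 1`). -/
noncomputable def supNorm {n : ℕ} [NeZero n] (f : ZMod n → ℝ) : ℝ :=
  Finset.univ.sup' Finset.univ_nonempty fun t => |f t|

section helpers

variable {n ε : ℕ} [NeZero n]

lemma abs_le_supNorm (f : ZMod n → ℝ) (t : ZMod n) : |f t| ≤ supNorm f := by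
  unfold supNorm
  exact Finset.le_sup' (fun t => |f t|) (Finset.mem_univ t)

lemma supNorm_nonneg (f : ZMod n → ℝ) : 0 ≤ supNorm f := by
  obtain ⟨t⟩ := (inferInstance : Nonempty (ZMod n))
  exact le_trans (abs_nonneg _) (abs_le_supNorm f t)

lemma supNorm_le {f : ZMod n → ℝ} {c : ℝ} (h : ∀ t, |f t| ≤ c) : supNorm f ≤ c :=
  Finset.sup'_le _ _ fun t _ => h t

lemma card_Icc_eps : (Finset.Icc (-(ε:ℤ)) (ε:ℤ)).card = 2*ε+1 := by
  rw [Int.card_Icc]; omega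

lemma abs_winAvg_le (f : ZMod n → ℝ) (t : ZMod n) : |winAvg n ε f t| ≤ supNorm f := by
  have hc : (0:ℝ) < 2 * (ε:ℝ) + 1 := by positivity
  have h1 : |∑ s ∈ Finset.Icc (-(ε:ℤ)) (ε:ℤ), f (t + (s : ZMod n))|
      ≤ ∑ s ∈ Finset.Icc (-(ε:ℤ)) (ε:ℤ), |f (t + (s : ZMod n))| :=
    Finset.abs_sum_le_sum_abs _ _
  have h2 : ∑ s ∈ Finset.Icc (-(ε:ℤ)) (ε:ℤ), |f (t + (s : ZMod n))|
      ≤ ∑ _s ∈ Finset.Icc (-(ε:ℤ)) (ε:ℤ), supNorm f :=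
    Finset.sum_le_sum fun s _ => abs_le_supNorm f _
  have h3 : ∑ _s ∈ Finset.Icc (-(ε:ℤ)) (ε:ℤ), supNorm f = (2*(ε:ℝ)+1) * supNorm f := by
    rw [Finset.sum_const, card_Icc_eps]
    push_cast
    ring
  have : |winAvg n ε f t| = (1 / (2*(ε:ℝ)+1)) *
      |∑ s ∈ Finset.Icc (-(ε:ℤ)) (ε:ℤ), f (t + (s : ZMod n))| := by
    rw [winAvg, abs_mul, abs_of_nonneg (by positivity : (0:ℝ) ≤ 1 / (2*(ε:ℝ)+1))]
  rw [this]
  calc (1 / (2*(ε:ℝ)+1)) * |∑ s ∈ Finset.Icc (-(ε:ℤ)) (ε:ℤ), f (t + (s : ZMod n))|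
      ≤ (1 / (2*(ε:ℝ)+1)) * ((2*(ε:ℝ)+1) * supNorm f) := by
        apply mul_le_mul_of_nonneg_left _ (by positivity)
        exact le_trans h1 (h2.trans h3.le)
    _ = supNorm f := by field_simp

lemma supNorm_winAvg_le (f : ZMod n → ℝ) : supNorm (winAvg n ε f) ≤ supNorm f :=
  supNorm_le fun t => abs_winAvg_le f t

lemma winAvg_sub (f g : ZMod n → ℝ) :
    winAvg n ε (f - g) = winAvg n ε f - winAvg n ε g := by
  funext t
  simp only [winAvg, Pi.sub_apply, Finset.sum_sub_distrib, mul_sub]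

lemma winAvg_sum (m : ℕ) (g : ℕ → ZMod n → ℝ) :
    winAvg n ε (fun t => ∑ k ∈ Finset.range m, g k t)
      = fun t => ∑ k ∈ Finset.range m, winAvg n ε (g k) t := by
  funext t
  simp only [winAvg, Finset.mul_sum]
  rw [Finset.sum_comm]

lemma winAvg_smul (c : ℝ) (f : ZMod n → ℝ) :
    winAvg n ε (fun t => c * f t) = fun t => c * winAvg n ε f t := by
  funext t
  simp only [winAvg, Finset.mul_sum]
  exact Finset.sum_congr rfl fun s _ => by ring

lemma homogeneous_zero {lam : ℝ} (hlam : 0 ≤ lam) (g : ZMod n → ℝ)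
    (h : ∀ t, g t = (lam / (1 + lam)) * winAvg n ε (winAvg n ε g) t) : g = 0 := by
  set q := lam / (1 + lam) with hqdef
  have hpos : (0:ℝ) < 1 + lam := by linarith
  have hq0 : 0 ≤ q := by positivity
  have hq1 : q < 1 := by rw [hqdef, div_lt_one hpos]; linarith
  have hb : supNorm g ≤ q * supNorm g := by
    apply supNorm_le
    intro t
    rw [h t, abs_mul, abs_of_nonneg hq0]
    exact mul_le_mul_of_nonneg_left
      (le_trans (abs_winAvg_le _ _) (supNorm_winAvg_le _)) hq0
  have hn := supNorm_nonneg g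
  have hzero : supNorm g ≤ 0 := by nlinarith
  funext t
  have := abs_le_supNorm g t
  have : |g t| ≤ 0 := le_trans this hzero
  have := abs_nonneg (g t)
  simp only [Pi.zero_apply]
  have h0 : |g t| = 0 := le_antisymm ‹|g t| ≤ 0› ‹0 ≤ |g t|›
  exact abs_eq_zero.mp h0

end helpers

/-- the equation `f = (1/(1+λ)) · (y + λ · A² f)` has a unique
solution, and this solution is the recursive convolutional average
`f = (1/(1+λ)) · ∑_{k=0}^∞ (λ/(1+λ))^k · A^{2k} y`, with the series converging
in sup norm: same geometric decay rate `λ/(1+λ)` as the asymmetric game, but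
with the kernel `A^{2k}` in place of `A^k`. -/
theorem symmetric_fixed_point_is_recursive_convolutional_average
    (n ε : ℕ) [NeZero n] (y : ZMod n → ℝ) (lam : ℝ) (hlam : 0 ≤ lam) :
    (∃! f : ZMod n → ℝ,
      ∀ t, f t = (1 / (1 + lam)) * (y t + lam * winAvg n ε (winAvg n ε f) t)) ∧
    (∀ f : ZMod n → ℝ,
      (∀ t, f t = (1 / (1 + lam)) * (y t + lam * winAvg n ε (winAvg n ε f) t)) →
      Filter.Tendsto
        (fun m : ℕ => supNorm (f - fun t =>
          ∑ k ∈ Finset.range m,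
            (1 / (1 + lam)) * ((lam / (1 + lam)) ^ k * (winAvg n ε)^[2 * k] y t)))
        Filter.atTop (nhds 0)) := by
  have hpos : (0:ℝ) < 1 + lam := by linarith
  set q : ℝ := lam / (1 + lam) with hqdef
  have hq0 : 0 ≤ q := by positivity
  have hq1 : q < 1 := by rw [hqdef, div_lt_one hpos]; linarith
  -- linear map L f = (1+lam) • f - lam • A² f
  have winAvg_smul' : ∀ (c : ℝ) (f : ZMod n → ℝ),
      winAvg n ε (c • f) = c • winAvg n ε f := by
    intro c f
    have := winAvg_smul (n := n) (ε := ε) c f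
    funext t
    have ht := congrFun this t
    exact ht
  have winAvg_add : ∀ (f g : ZMod n → ℝ),
      winAvg n ε (f + g) = winAvg n ε f + winAvg n ε g := by
    intro f g
    funext t
    simp only [winAvg, Pi.add_apply, Finset.sum_add_distrib, mul_add]
  let L : (ZMod n → ℝ) →ₗ[ℝ] (ZMod n → ℝ) :=
    { toFun := fun f => (1 + lam) • f - lam • winAvg n ε (winAvg n ε f)
      map_add' := by
        intro f g
        simp only [winAvg_add]
        module
      map_smul' := by
        intro c f
        simp only [winAvg_smul', RingHom.id_apply]
        module }
  have hLinj : Function.Injective L := by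
    rw [← LinearMap.ker_eq_bot, LinearMap.ker_eq_bot']
    intro g hg
    apply homogeneous_zero hlam g
    intro t
    have ht := congrFun hg t
    simp only [L, LinearMap.coe_mk, AddHom.coe_mk, Pi.sub_apply, Pi.smul_apply,
      smul_eq_mul, Pi.zero_apply] at ht
    have : (1 + lam) * g t = lam * winAvg n ε (winAvg n ε g) t := by linarith
    field_simp [hqdef]
    linarith
  have hLsurj : Function.Surjective L :=
    (LinearMap.injective_iff_surjective).mp hLinj
  obtain ⟨f₀, hf₀⟩ := hLsurj y
  have hfix : ∀ t, f₀ t = (1 / (1 + lam)) * (y t + lam * winAvg n ε (winAvg n ε f₀) t) := by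
    intro t
    have ht := congrFun hf₀ t
    simp only [L, LinearMap.coe_mk, AddHom.coe_mk, Pi.sub_apply, Pi.smul_apply,
      smul_eq_mul] at ht
    field_simp
    linarith
  constructor
  · refine ⟨f₀, hfix, ?_⟩
    intro g hg
    have : g - f₀ = 0 := by
      apply homogeneous_zero hlam
      intro t
      have h1 := hg t
      have h2 := hfix t
      have h3 : winAvg n ε (winAvg n ε (g - f₀)) t
          = winAvg n ε (winAvg n ε g) t - winAvg n ε (winAvg n ε f₀) t := by
        rw [winAvg_sub, winAvg_sub]; simp
      simp only [Pi.sub_apply]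
      rw [h3, h1, h2]
      field_simp
      ring
    have := sub_eq_zero.mp this
    exact this
  · intro f hf
    set S : ℕ → ZMod n → ℝ := fun m t =>
      ∑ k ∈ Finset.range m,
        (1 / (1 + lam)) * ((lam / (1 + lam)) ^ k * (winAvg n ε)^[2 * k] y t) with hS
    have key : ∀ m t, f t - S (m+1) t = q * winAvg n ε (winAvg n ε (f - S m)) t := by
      intro m t
      have hA2S : winAvg n ε (winAvg n ε (S m))
          = fun t => ∑ k ∈ Finset.range m,
            (1 / (1 + lam)) * (q ^ k * (winAvg n ε)^[2 * k + 2] y t) := by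
        rw [hS]
        rw [winAvg_sum]
        have : (fun t => ∑ k ∈ Finset.range m,
            winAvg n ε (fun t' => (1 / (1 + lam)) * (q ^ k * (winAvg n ε)^[2 * k] y t')) t)
            = fun t => ∑ k ∈ Finset.range m,
              (1 / (1 + lam)) * (q ^ k * (winAvg n ε)^[2 * k + 1] y t) := by
          funext t'
          apply Finset.sum_congr rfl
          intro k _
          have h1 : winAvg n ε (fun t'' => (1 / (1 + lam)) * (q ^ k * (winAvg n ε)^[2 * k] y t''))
              = fun t'' => (1 / (1 + lam)) * (q ^ k * winAvg n ε ((winAvg n ε)^[2 * k] y) t'') := by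
            rw [show (fun t'' => (1 / (1 + lam)) * (q ^ k * (winAvg n ε)^[2 * k] y t''))
                = fun t'' => ((1 / (1 + lam)) * q ^ k) * (winAvg n ε)^[2 * k] y t'' by
                  funext t''; ring]
            rw [winAvg_smul]
            funext t''; ring
          rw [h1]
          rw [← Function.iterate_succ_apply' (winAvg n ε) (2*k) y]
        rw [this, winAvg_sum]
        funext t'
        apply Finset.sum_congr rfl
        intro k _
        have h1 : winAvg n ε (fun t'' => (1 / (1 + lam)) * (q ^ k * (winAvg n ε)^[2 * k + 1] y t''))
            = fun t'' => (1 / (1 + lam)) * (q ^ k * winAvg n ε ((winAvg n ε)^[2 * k + 1] y) t'') := by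
          rw [show (fun t'' => (1 / (1 + lam)) * (q ^ k * (winAvg n ε)^[2 * k + 1] y t''))
              = fun t'' => ((1 / (1 + lam)) * q ^ k) * (winAvg n ε)^[2 * k + 1] y t'' by
                funext t''; ring]
          rw [winAvg_smul]
          funext t''; ring
        rw [h1]
        rw [← Function.iterate_succ_apply' (winAvg n ε) (2*k+1) y]
      have hsub : winAvg n ε (winAvg n ε (f - S m)) t
          = winAvg n ε (winAvg n ε f) t - winAvg n ε (winAvg n ε (S m)) t := by
        rw [winAvg_sub, winAvg_sub]; simp
      rw [hsub, hA2S]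
      have hSsucc : S (m+1) t = (1 / (1 + lam)) * y t
          + ∑ k ∈ Finset.range m,
            (1 / (1 + lam)) * (q ^ (k+1) * (winAvg n ε)^[2 * (k+1)] y t) := by
        have hr : S (m+1) t = ∑ k ∈ Finset.range (m+1),
            (1 / (1 + lam)) * (q ^ k * (winAvg n ε)^[2 * k] y t) := rfl
        rw [hr, Finset.sum_range_succ']
        simp only [pow_zero, Nat.mul_zero, Function.iterate_zero, id_eq, one_mul]
        rw [add_comm]
      rw [hSsucc, hf t]
      have hiter : ∀ k, (winAvg n ε)^[2 * (k+1)] y t = (winAvg n ε)^[2 * k + 2] y t := by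
        intro k; have h2 : 2*(k+1) = 2*k+2 := by omega
        rw [h2]
      rw [mul_sub, Finset.mul_sum]
      have hterm : ∀ k ∈ Finset.range m,
          (1 / (1 + lam)) * (q ^ (k+1) * (winAvg n ε)^[2 * (k+1)] y t)
          = q * ((1 / (1 + lam)) * (q ^ k * (winAvg n ε)^[2 * k + 2] y t)) := by
        intro k _
        rw [hiter k]
        ring
      rw [Finset.sum_congr rfl hterm]
      rw [hqdef]
      ring
    have hbound : ∀ m, supNorm (f - S m) ≤ q ^ m * supNorm f := by
      intro m
      induction m with
      | zero =>
        simp only [pow_zero, one_mul]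
        have : S 0 = 0 := by funext t; simp [hS]
        rw [this, sub_zero]
      | succ m ih =>
        have h1 : supNorm (f - S (m+1)) ≤ q * supNorm (f - S m) := by
          apply supNorm_le
          intro t
          have := key m t
          rw [show (f - S (m+1)) t = f t - S (m+1) t from rfl, this, abs_mul,
            abs_of_nonneg hq0]
          exact mul_le_mul_of_nonneg_left
            (le_trans (abs_winAvg_le _ _) (supNorm_winAvg_le _)) hq0
        calc supNorm (f - S (m+1)) ≤ q * supNorm (f - S m) := h1
          _ ≤ q * (q ^ m * supNorm f) := mul_le_mul_of_nonneg_left ih hq0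
          _ = q ^ (m+1) * supNorm f := by ring
    have htend : Filter.Tendsto (fun m : ℕ => q ^ m * supNorm f) Filter.atTop (nhds 0) := by
      have := (tendsto_pow_atTop_nhds_zero_of_lt_one hq0 hq1).mul_const (supNorm f)
      simpa using this
    exact squeeze_zero (fun m => supNorm_nonneg _) hbound htend
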